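/- Let f : ℝⁿ → ℝ be differentiable with L-Lipschitz gradient, and suppose ‖∇f(x)‖ ≤ ϱ for all x in a set M. Let R : E → ℝⁿ be a map with ‖R(v) - x‖ ≤ M₁‖v‖ and ‖R(v) - x - v‖ ≤ M₂‖v‖² for a fixed x ∈ M and all v. Then for all v, f(R(v)) ≤ f(x) + ⟨∇f(x), v⟩ + (ϱM₂ + (1/2)L M₁²)‖v‖². -/

import Mathlib

open RealInnerProductSpace

lemma descent {E : Type*} [NormedAddCommGroup E] [InnerProductSpace ℝ E] [CompleteSpace E]
    (f : E → ℝ) (G : E → E) (L : ℝ)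
    (hdiff : ∀ x : E, HasGradientAt f (G x) x)
    (hLip : ∀ x y : E, ‖G x - G y‖ ≤ L * ‖x - y‖) (x y : E) :
    f y ≤ f x + ⟪G x, y - x⟫ + L / 2 * ‖y - x‖ ^ 2 := by
  set d := y - x with hd
  have hGc : Continuous G := by
    have : LipschitzWith (Real.toNNReal L) G := by
      apply LipschitzWith.of_dist_le_mul
      intro a b
      rw [dist_eq_norm, dist_eq_norm]
      refine le_trans (hLip a b) (mul_le_mul_of_nonneg_right ?_ (norm_nonneg _))
      simp [Real.coe_toNNReal', le_max_left]
    exact this.continuous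
  have key : ∀ t : ℝ, HasDerivAt (fun t : ℝ => f (x + t • d)) ⟪G (x + t • d), d⟫ t := by
    intro t
    have h1 : HasDerivAt (fun t : ℝ => x + t • d) d t := by
      simpa using ((hasDerivAt_id t).smul_const d).const_add x
    have h2 := ((hdiff (x + t • d)).hasFDerivAt).comp_hasDerivAt t h1
    simpa [InnerProductSpace.toDual_apply_apply, Function.comp_def] using h2
  have hφc : Continuous fun t : ℝ => ⟪G (x + t • d), d⟫ := by
    exact (hGc.comp (by continuity : Continuous fun t : ℝ => x + t • d)).inner continuous_const
  have hint : f y - f x = ∫ t in (0:ℝ)..1, ⟪G (x + t • d), d⟫ := by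
    have := intervalIntegral.integral_eq_sub_of_hasDerivAt (f := fun t : ℝ => f (x + t • d))
      (f' := fun t : ℝ => ⟪G (x + t • d), d⟫) (a := 0) (b := 1)
      (fun t _ => key t) (hφc.intervalIntegrable 0 1)
    rw [this]; simp [hd]
  have hbound : ∀ t ∈ Set.Icc (0:ℝ) 1,
      ⟪G (x + t • d), d⟫ ≤ ⟪G x, d⟫ + L * ‖d‖ ^ 2 * t := by
    intro t ht
    have h1 : ⟪G (x + t • d), d⟫ - ⟪G x, d⟫ = ⟪G (x + t • d) - G x, d⟫ := by
      rw [inner_sub_left]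
    have h2 : ⟪G (x + t • d) - G x, d⟫ ≤ ‖G (x + t • d) - G x‖ * ‖d‖ :=
      real_inner_le_norm _ _
    have h3 : ‖G (x + t • d) - G x‖ ≤ L * (t * ‖d‖) := by
      have := hLip (x + t • d) x
      simpa [norm_smul, abs_of_nonneg ht.1] using this
    nlinarith [norm_nonneg d, mul_le_mul_of_nonneg_right h3 (norm_nonneg d)]
  have hI : (∫ t in (0:ℝ)..1, ⟪G (x + t • d), d⟫)
      ≤ ∫ t in (0:ℝ)..1, (⟪G x, d⟫ + L * ‖d‖ ^ 2 * t) := by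
    apply intervalIntegral.integral_mono_on zero_le_one
      (hφc.intervalIntegrable 0 1)
      (by apply Continuous.intervalIntegrable; continuity)
      hbound
  have hI2 : (∫ t in (0:ℝ)..1, (⟪G x, d⟫ + L * ‖d‖ ^ 2 * t)) = ⟪G x, d⟫ + L / 2 * ‖d‖ ^ 2 := by
    rw [intervalIntegral.integral_add (by apply Continuous.intervalIntegrable; continuity)
      (by apply Continuous.intervalIntegrable; continuity)]
    rw [intervalIntegral.integral_const_mul, integral_id]
    simp; ring
  linarith [hI2 ▸ hI, hint]

theorem stmt_2 {E : Type*} [NormedAddCommGroup E] [InnerProductSpace ℝ E] [CompleteSpace E]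
    (f : E → ℝ) (G : E → E) (L ϱ M₁ M₂ : ℝ)
    (hdiff : ∀ x : E, HasGradientAt f (G x) x)
    (hLip : ∀ x y : E, ‖G x - G y‖ ≤ L * ‖x - y‖)
    (M : Set E) (hbound : ∀ x ∈ M, ‖G x‖ ≤ ϱ)
    (x : E) (hx : x ∈ M) (R : E → E)
    (hR1 : ∀ v : E, ‖R v - x‖ ≤ M₁ * ‖v‖)
    (hR2 : ∀ v : E, ‖R v - x - v‖ ≤ M₂ * ‖v‖ ^ 2) :
    ∀ v : E, f (R v) ≤ f x + ⟪G x, v⟫ + (ϱ * M₂ + (1/2) * L * M₁ ^ 2) * ‖v‖ ^ 2 := by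
  intro v
  by_cases hE : Subsingleton E
  · have hv : v = 0 := Subsingleton.elim v 0
    have hRx : R v = x := Subsingleton.elim _ _
    rw [hRx, hv]
    simp
  · -- nontrivial
    have : Nontrivial E := not_subsingleton_iff_nontrivial.mp hE
    obtain ⟨a, b, hab⟩ := exists_pair_ne E
    have hL : 0 ≤ L := by
      have h1 : (0:ℝ) ≤ L * ‖a - b‖ := le_trans (norm_nonneg _) (hLip a b)
      have h2 : 0 < ‖a - b‖ := by simpa [sub_eq_zero] using hab
      exact nonneg_of_mul_nonneg_right (mul_comm L ‖a - b‖ ▸ h1) h2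
    have hdesc := descent f G L hdiff hLip x (R v)
    have hϱ : 0 ≤ ϱ := le_trans (norm_nonneg _) (hbound x hx)
    have hinner : ⟪G x, R v - x⟫ ≤ ⟪G x, v⟫ + ϱ * M₂ * ‖v‖ ^ 2 := by
      have h1 : ⟪G x, R v - x⟫ = ⟪G x, v⟫ + ⟪G x, R v - x - v⟫ := by
        rw [← inner_add_right]
        congr 1
        abel
      have h2 : ⟪G x, R v - x - v⟫ ≤ ‖G x‖ * ‖R v - x - v‖ := real_inner_le_norm _ _
      have h3 : ‖G x‖ * ‖R v - x - v‖ ≤ ϱ * (M₂ * ‖v‖ ^ 2) :=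
        mul_le_mul (hbound x hx) (hR2 v) (norm_nonneg _) hϱ
      rw [h1]; linarith
    have hsq : ‖R v - x‖ ^ 2 ≤ (M₁ * ‖v‖) ^ 2 :=
      pow_le_pow_left₀ (norm_nonneg _) (hR1 v) 2
    have h4 : L / 2 * ‖R v - x‖ ^ 2 ≤ 1/2 * L * M₁ ^ 2 * ‖v‖ ^ 2 := by
      have := mul_le_mul_of_nonneg_left hsq (by linarith : (0:ℝ) ≤ L / 2)
      nlinarith
    nlinarith [hdesc, hinner, h4]
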